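/- Fix finite sets and the union-coverage model: for each v ∈ V a set A_v ⊆ U, f(X) = |⋃_{v∈X} A_v|. The greedy algorithm that iteratively adds the element with maximum marginal gain for k steps produces a set S_k with f(S_k) ≥ (1 − (1 − 1/k)^k)·max_{|X|=k} f(X) ≥ (1 − 1/e)·max_{|X|=k} f(X). -/

import Mathlib

open Finset

/-- Greedy for union coverage: the greedy algorithm adding for `k` steps the element of
maximum marginal gain achieves at least `(1 - (1 - 1/k)^k) ≥ (1 - 1/e)` times the optimum
over sets of size `k`. -/
theorem stmt18 {V U : Type*} [Fintype V] [Fintype U] [DecidableEq V] [DecidableEq U]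
    (A : V → Finset U) (k : ℕ) (hk : 0 < k)
    (f : Finset V → ℝ) (hf : ∀ X : Finset V, f X = ((X.biUnion A).card : ℝ))
    (g : ℕ → V) (S : ℕ → Finset V)
    (hS : ∀ i, S i = (Finset.range i).image g)
    (hgreedy : ∀ i < k, ∀ w : V, f (S i ∪ {w}) ≤ f (S i ∪ {g i})) :
    ∀ X : Finset V, X.card = k →
      (1 - (1 - 1 / (k : ℝ)) ^ k) * f X ≤ f (S k) ∧
      (1 - 1 / Real.exp 1) * f X ≤ f (S k) := by
  intro X hX
  have hkR : (0:ℝ) < (k:ℝ) := by exact_mod_cast hk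
  set B : ℕ → Finset U := fun i => (S i).biUnion A with hB
  have hf0 : f (S 0) = 0 := by simp [hf, hS]
  have hSsucc : ∀ i, S (i+1) = S i ∪ {g i} := by
    intro i
    rw [hS, hS, Finset.range_add_one, Finset.image_insert]
    ext x; simp [or_comm]
  have hmarg : ∀ i, ∀ w : V, f (S i ∪ {w}) = ((B i).card : ℝ) + ((A w \ B i).card : ℝ) := by
    intro i w
    rw [hf]
    have : (S i ∪ {w}).biUnion A = B i ∪ (A w \ B i) := by
      rw [Finset.union_comm, ← Finset.insert_eq, Finset.biUnion_insert,
        Finset.union_comm (A w), Finset.union_sdiff_self_eq_union]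
    rw [this, Finset.card_union_of_disjoint Finset.disjoint_sdiff]
    push_cast
    ring
  -- key step inequality
  have key : ∀ i < k, f X - f (S i) ≤ (k:ℝ) * (f (S (i+1)) - f (S i)) := by
    intro i hi
    have hg : ∀ w : V, ((A w \ B i).card : ℝ) ≤ ((A (g i) \ B i).card : ℝ) := by
      intro w
      have := hgreedy i hi w
      rw [hmarg, hmarg] at this
      linarith
    have hmono : f X ≤ ((B i ∪ X.biUnion A).card : ℝ) := by
      rw [hf]
      exact_mod_cast Finset.card_le_card (Finset.subset_union_right)
    have hsplit : ((B i ∪ X.biUnion A).card : ℝ)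
        = ((B i).card : ℝ) + (((X.biUnion A) \ B i).card : ℝ) := by
      rw [← Finset.union_sdiff_self_eq_union,
        Finset.card_union_of_disjoint Finset.disjoint_sdiff]
      push_cast
      ring
    have hsub : (((X.biUnion A) \ B i).card : ℝ) ≤ ∑ x ∈ X, ((A x \ B i).card : ℝ) := by
      have h1 : (X.biUnion A) \ B i = X.biUnion (fun x => A x \ B i) := by
        ext u; simp; tauto
      rw [h1]
      exact_mod_cast (Nat.cast_le.mpr (Finset.card_biUnion_le))
    have hsum : ∑ x ∈ X, ((A x \ B i).card : ℝ) ≤ (k:ℝ) * ((A (g i) \ B i).card : ℝ) := by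
      calc ∑ x ∈ X, ((A x \ B i).card : ℝ) ≤ ∑ _x ∈ X, ((A (g i) \ B i).card : ℝ) :=
            Finset.sum_le_sum (fun x _ => hg x)
        _ = (k:ℝ) * ((A (g i) \ B i).card : ℝ) := by
            rw [Finset.sum_const, hX]; push_cast; ring
    have hstep : f (S (i+1)) = ((B i).card : ℝ) + ((A (g i) \ B i).card : ℝ) := by
      rw [hSsucc i]; exact hmarg i (g i)
    have hfi : f (S i) = ((B i).card : ℝ) := by rw [hf]
    rw [hstep, hfi]
    linarith
  -- induction
  have hind : ∀ i, i ≤ k → f X - f (S i) ≤ (1 - 1/(k:ℝ))^i * f X := by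
    intro i
    induction i with
    | zero => intro _; simp [hf0]
    | succ n ih =>
      intro hn
      have hn' : n < k := hn
      have h1 := key n hn'
      have h2 := ih (le_of_lt hn')
      have hc : 0 ≤ 1 - 1/(k:ℝ) := by
        have : 1/(k:ℝ) ≤ 1 := by
          rw [div_le_one hkR]; exact_mod_cast hk
        linarith
      have h3 : f X - f (S (n+1)) ≤ (1 - 1/(k:ℝ)) * (f X - f (S n)) := by
        have hk0 : (k:ℝ) ≠ 0 := ne_of_gt hkR
        rw [show (1 - 1/(k:ℝ)) * (f X - f (S n))
            = ((k:ℝ) * (f X - f (S n)) - (f X - f (S n)))/k by field_simp,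
          le_div_iff₀ hkR]
        linarith
      calc f X - f (S (n+1)) ≤ (1 - 1/(k:ℝ)) * (f X - f (S n)) := h3
        _ ≤ (1 - 1/(k:ℝ)) * ((1 - 1/(k:ℝ))^n * f X) := by
            exact mul_le_mul_of_nonneg_left h2 hc
        _ = (1 - 1/(k:ℝ))^(n+1) * f X := by ring
  have hmain := hind k le_rfl
  have hfin : (1 - (1 - 1 / (k : ℝ)) ^ k) * f X ≤ f (S k) := by nlinarith [hmain]
  refine ⟨hfin, ?_⟩
  have hfX : 0 ≤ f X := by rw [hf]; positivity
  have hc : 0 ≤ 1 - 1/(k:ℝ) := by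
    have : 1/(k:ℝ) ≤ 1 := by rw [div_le_one hkR]; exact_mod_cast hk
    linarith
  have hexp : (1 - 1/(k:ℝ))^k ≤ 1 / Real.exp 1 := by
    have h1 : 1 - 1/(k:ℝ) ≤ Real.exp (-(1/(k:ℝ))) := by
      have := Real.add_one_le_exp (-(1/(k:ℝ)))
      linarith
    have h2 : (1 - 1/(k:ℝ))^k ≤ (Real.exp (-(1/(k:ℝ))))^k :=
      pow_le_pow_left₀ hc h1 k
    have h3 : (Real.exp (-(1/(k:ℝ))))^k = Real.exp (-1) := by
      rw [← Real.exp_nat_mul]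
      congr 1
      field_simp
    rw [h3] at h2
    simpa [Real.exp_neg, one_div] using h2
  have : (1 - 1 / Real.exp 1) * f X ≤ (1 - (1 - 1 / (k : ℝ)) ^ k) * f X := by
    apply mul_le_mul_of_nonneg_right _ hfX
    linarith
  linarith
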